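/- For every positive integer k, the group P_k = ⟨a, b ∣ a b^{2^k} a⁻¹ b^{2^k}, b a² b⁻¹ a²⟩ is torsion-free. -/

import Mathlib

/-- The relations of `P_k = ⟨a, b ∣ a b^(2^k) a⁻¹ b^(2^k), b a² b⁻¹ a²⟩`,
where `a` is `FreeGroup.of 0` and `b` is `FreeGroup.of 1`. -/
def PkRels (k : ℕ) : Set (FreeGroup (Fin 2)) :=
  { FreeGroup.of 0 * (FreeGroup.of 1) ^ (2 ^ k) * (FreeGroup.of 0)⁻¹ * (FreeGroup.of 1) ^ (2 ^ k),
    FreeGroup.of 1 * (FreeGroup.of 0) ^ 2 * (FreeGroup.of 1)⁻¹ * (FreeGroup.of 0) ^ 2 }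

/-- The group `P_k`. -/
abbrev Pk (k : ℕ) : Type := PresentedGroup (PkRels k)




namespace PkModel

/-- Raw normal forms: a word (list of syllables: `0` = `a`, `c ∈ [1, N-1]` = `b^c`),
and exponents of the central-ish elements `x = a^2`, `y = b^N`. -/
abbrev Raw : Type := List ℕ × ℤ × ℤ

/-- alternation relation: exactly one of two adjacent syllables is `a`. -/
def Alt (p q : ℕ) : Prop := (p = 0 ↔ ¬ q = 0)

/-- words that are valid normal forms -/
def ok (N : ℕ) (w : List ℕ) : Prop := (∀ c ∈ w, c < N) ∧ w.Chain' Alt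

abbrev S (N : ℕ) : Type := {r : Raw // ok N r.1}

/-- sign by which `x` moves across a word -/
def eps (w : List ℕ) : ℤ := (-1) ^ (w.sum)
/-- sign by which `y` moves across a word -/
def del (w : List ℕ) : ℤ := (-1) ^ (w.count 0)

@[simp] lemma eps_nil : eps [] = 1 := rfl
@[simp] lemma del_nil : del [] = 1 := rfl
@[simp] lemma eps_cons (c : ℕ) (t : List ℕ) : eps (c :: t) = (-1) ^ c * eps t := by
  simp [eps, pow_add]
@[simp] lemma del_cons_zero (t : List ℕ) : del (0 :: t) = - del t := by
  simp [del, List.count_cons, pow_add]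
lemma del_cons_ne (c : ℕ) (t : List ℕ) (hc : c ≠ 0) : del (c :: t) = del t := by
  have : (0 = c) = False := by simp [Ne.symm hc]
  simp [del, List.count_cons, this, hc]

def aF : Raw → Raw
  | (0 :: t, m, l) => (t, m + eps t, l)
  | (w, m, l) => (0 :: w, m, l)

def aI : Raw → Raw
  | (0 :: t, m, l) => (t, m, l)
  | (w, m, l) => (0 :: w, m - eps w, l)

def bF (N : ℕ) : Raw → Raw
  | ([], m, l) => ([1], m, l)
  | (0 :: t, m, l) => (1 :: 0 :: t, m, l)
  | ((c+1) :: t, m, l) => if c + 2 = N then (t, m, l + del t) else ((c+2) :: t, m, l)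

def bI (N : ℕ) : Raw → Raw
  | ([], m, l) => ([N-1], m, l - 1)
  | (0 :: t, m, l) => ((N-1) :: 0 :: t, m, l + del t)
  | (1 :: t, m, l) => (t, m, l)
  | ((c+2) :: t, m, l) => ((c+1) :: t, m, l)

def xF : Raw → Raw := fun (w, m, l) => (w, m + eps w, l)
def xI : Raw → Raw := fun (w, m, l) => (w, m - eps w, l)
def yF : Raw → Raw := fun (w, m, l) => (w, m, l + del w)
def yI : Raw → Raw := fun (w, m, l) => (w, m, l - del w)

section okLemmas

variable {N : ℕ}

lemma ok_nil : ok N ([] : List ℕ) := ⟨by simp, List.isChain_nil⟩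

lemma ok_tail {c : ℕ} {t : List ℕ} (h : ok N (c :: t)) : ok N t :=
  ⟨fun d hd => h.1 d (List.mem_cons_of_mem _ hd), (List.isChain_cons.1 h.2).2⟩

lemma ok_head_lt {c : ℕ} {t : List ℕ} (h : ok N (c :: t)) : c < N :=
  h.1 c (List.mem_cons_self)

/-- in a valid word starting with `0`, the tail is empty or starts with a nonzero -/
lemma ok_zero_head {t : List ℕ} (h : ok N (0 :: t)) :
    t = [] ∨ ∃ c t', t = c :: t' ∧ c ≠ 0 := by
  cases t with
  | nil => exact Or.inl rfl
  | cons c t' =>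
    refine Or.inr ⟨c, t', rfl, ?_⟩
    have := (List.isChain_cons_cons.1 h.2).1
    unfold Alt at this
    tauto

lemma ok_ne_head {c : ℕ} {t : List ℕ} (h : ok N (c :: t)) (hc : c ≠ 0) :
    t = [] ∨ ∃ t', t = 0 :: t' := by
  cases t with
  | nil => exact Or.inl rfl
  | cons d t' =>
    have := (List.isChain_cons_cons.1 h.2).1
    unfold Alt at this
    refine Or.inr ⟨t', ?_⟩
    have : d = 0 := by tauto
    rw [this]

lemma ok_cons {c : ℕ} {t : List ℕ} (ht : ok N t) (hc : c < N)
    (hh : ∀ d ∈ t.head?, Alt c d) : ok N (c :: t) := by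
  refine ⟨?_, List.isChain_cons.2 ⟨hh, ht.2⟩⟩
  intro d hd
  rcases List.mem_cons.1 hd with h | h
  · rwa [h]
  · exact ht.1 d h

lemma ok_cons_zero_of {t : List ℕ} (ht : ok N t) (hN : 0 < N)
    (h : t = [] ∨ ∃ c t', t = c :: t' ∧ c ≠ 0) : ok N (0 :: t) := by
  refine ok_cons ht hN ?_
  intro d hd
  rcases h with h | ⟨c, t', rfl, hc⟩
  · simp [h] at hd
  · simp at hd
    unfold Alt
    subst hd
    simpa using hc

lemma ok_cons_ne_of {t : List ℕ} (ht : ok N t) {c : ℕ} (hc : c ≠ 0) (hcN : c < N)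
    (h : t = [] ∨ ∃ t', t = 0 :: t') : ok N (c :: t) := by
  refine ok_cons ht hcN ?_
  intro d hd
  rcases h with h | ⟨t', rfl⟩
  · simp [h] at hd
  · simp at hd
    unfold Alt
    subst hd
    simpa using hc

end okLemmas



section EquivDefs

variable (N : ℕ) (hN : 2 ≤ N)

lemma ok_aF (hN : 2 ≤ N) {r : Raw} (h : ok N r.1) : ok N (aF r).1 := by
  obtain ⟨w, m, l⟩ := r
  rcases w with _ | ⟨c, t⟩
  · exact ok_cons_zero_of ok_nil (by omega) (Or.inl rfl)
  · rcases c with _ | c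
    · exact ok_tail h
    · exact ok_cons_zero_of h (by omega) (Or.inr ⟨c+1, t, rfl, by omega⟩)

lemma ok_aI (hN : 2 ≤ N) {r : Raw} (h : ok N r.1) : ok N (aI r).1 := by
  obtain ⟨w, m, l⟩ := r
  rcases w with _ | ⟨c, t⟩
  · exact ok_cons_zero_of ok_nil (by omega) (Or.inl rfl)
  · rcases c with _ | c
    · exact ok_tail h
    · exact ok_cons_zero_of h (by omega) (Or.inr ⟨c+1, t, rfl, by omega⟩)

lemma ok_bF (hN : 2 ≤ N) {r : Raw} (h : ok N r.1) : ok N (bF N r).1 := by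
  obtain ⟨w, m, l⟩ := r
  rcases w with _ | ⟨c, t⟩
  · exact ok_cons_ne_of ok_nil one_ne_zero (by omega) (Or.inl rfl)
  · rcases c with _ | c
    · exact ok_cons_ne_of h one_ne_zero (by omega) (Or.inr ⟨t, rfl⟩)
    · have hcN : c + 1 < N := ok_head_lt h
      by_cases hc : c + 2 = N
      · simp only [bF, if_pos hc]
        exact ok_tail h
      · simp only [bF, if_neg hc]
        exact ok_cons_ne_of (ok_tail h) (by omega) (by omega) (ok_ne_head h (by omega))

lemma ok_bI (hN : 2 ≤ N) {r : Raw} (h : ok N r.1) : ok N (bI N r).1 := by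
  obtain ⟨w, m, l⟩ := r
  rcases w with _ | ⟨c, t⟩
  · exact ok_cons_ne_of ok_nil (by omega) (by omega) (Or.inl rfl)
  · rcases c with _ | c
    · exact ok_cons_ne_of h (by omega) (by omega) (Or.inr ⟨t, rfl⟩)
    · rcases c with _ | c
      · exact ok_tail h
      · have hcN : c + 2 < N := ok_head_lt h
        exact ok_cons_ne_of (ok_tail h) (by omega) (by omega) (ok_ne_head h (by omega))

lemma aIF {r : Raw} (h : ok N r.1) : aI (aF r) = r := by
  obtain ⟨w, m, l⟩ := r
  rcases w with _ | ⟨c, t⟩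
  · simp [aF, aI]
  · rcases c with _ | c
    · rcases ok_zero_head h with h' | ⟨c', t', rfl, hc'⟩
      · subst h'; simp [aF, aI]
      · rcases c' with _ | c'
        · omega
        · simp [aF, aI]
    · simp [aF, aI]

lemma aFI {r : Raw} (h : ok N r.1) : aF (aI r) = r := by
  obtain ⟨w, m, l⟩ := r
  rcases w with _ | ⟨c, t⟩
  · simp [aF, aI]
  · rcases c with _ | c
    · rcases ok_zero_head h with h' | ⟨c', t', rfl, hc'⟩
      · subst h'; simp [aF, aI]
      · rcases c' with _ | c'
        · omega
        · simp [aF, aI]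
    · simp [aF, aI]

lemma bIF (hN : 2 ≤ N) {r : Raw} (h : ok N r.1) : bI N (bF N r) = r := by
  obtain ⟨w, m, l⟩ := r
  rcases w with _ | ⟨c, t⟩
  · simp [bF, bI]
  · rcases c with _ | c
    · simp [bF, bI]
    · have hcN : c + 1 < N := ok_head_lt h
      by_cases hc : c + 2 = N
      · simp only [bF, if_pos hc]
        have h3 : N - 1 = c + 1 := by omega
        rcases ok_ne_head h (by omega) with h' | ⟨t', rfl⟩
        · subst h'
          simp [bI, h3]
        · simp only [bI, del_cons_zero, h3, Prod.mk.injEq]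
          and_intros <;> first | trivial | ring
      · simp only [bF, if_neg hc, bI]

lemma bFI (hN : 2 ≤ N) {r : Raw} (h : ok N r.1) : bF N (bI N r) = r := by
  obtain ⟨w, m, l⟩ := r
  rcases w with _ | ⟨c, t⟩
  · have h1 : N - 1 = (N - 2) + 1 := by omega
    simp only [bI, h1, bF]
    have h2 : N - 2 + 2 = N := by omega
    simp [h2]
  · rcases c with _ | c
    · have h1 : N - 1 = (N - 2) + 1 := by omega
      simp only [bI, h1, bF]
      have h2 : N - 2 + 2 = N := by omega
      rw [if_pos h2]
      simp only [del_cons_zero, Prod.mk.injEq]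
      and_intros <;> first | trivial | ring
    · rcases c with _ | c
      · simp only [bI]
        rcases ok_ne_head h (by omega) with h' | ⟨t', rfl⟩
        · subst h'; simp [bF]
        · simp [bF]
      · have hcN : c + 2 < N := ok_head_lt h
        simp only [bI, bF, if_neg (show ¬ c + 2 = N by omega)]

/-- the permutation of normal forms given by left multiplication by `a` -/
def aE (hN : 2 ≤ N) : Equiv.Perm (S N) :=
  { toFun := fun s => ⟨aF s.val, ok_aF N hN s.2⟩
    invFun := fun s => ⟨aI s.val, ok_aI N hN s.2⟩
    left_inv := fun s => Subtype.ext (aIF N s.2)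
    right_inv := fun s => Subtype.ext (aFI N s.2) }

/-- the permutation of normal forms given by left multiplication by `b` -/
def bE : Equiv.Perm (S N) :=
  { toFun := fun s => ⟨bF N s.val, ok_bF N hN s.2⟩
    invFun := fun s => ⟨bI N s.val, ok_bI N hN s.2⟩
    left_inv := fun s => Subtype.ext (bIF N hN s.2)
    right_inv := fun s => Subtype.ext (bFI N hN s.2) }

/-- the permutation of normal forms given by left multiplication by `x = a^2` -/
def xE : Equiv.Perm (S N) :=
  { toFun := fun s => ⟨xF s.val, by obtain ⟨⟨w,m,l⟩,h⟩ := s; exact h⟩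
    invFun := fun s => ⟨xI s.val, by obtain ⟨⟨w,m,l⟩,h⟩ := s; exact h⟩
    left_inv := fun s => by obtain ⟨⟨w,m,l⟩,h⟩ := s; exact Subtype.ext (by simp [xF, xI])
    right_inv := fun s => by obtain ⟨⟨w,m,l⟩,h⟩ := s; exact Subtype.ext (by simp [xF, xI]) }

/-- the permutation of normal forms given by left multiplication by `y = b^N` -/
def yE : Equiv.Perm (S N) :=
  { toFun := fun s => ⟨yF s.val, by obtain ⟨⟨w,m,l⟩,h⟩ := s; exact h⟩
    invFun := fun s => ⟨yI s.val, by obtain ⟨⟨w,m,l⟩,h⟩ := s; exact h⟩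
    left_inv := fun s => by obtain ⟨⟨w,m,l⟩,h⟩ := s; exact Subtype.ext (by simp [yF, yI])
    right_inv := fun s => by obtain ⟨⟨w,m,l⟩,h⟩ := s; exact Subtype.ext (by simp [yF, yI]) }

variable {N}

@[simp] lemma aE_val (s : S N) : ((aE N hN) s).val = aF s.val := rfl
@[simp] lemma bE_val (s : S N) : ((bE N hN) s).val = bF N s.val := rfl
@[simp] lemma xE_val (s : S N) : ((xE N) s).val = xF s.val := rfl
@[simp] lemma yE_val (s : S N) : ((yE N) s).val = yF s.val := rfl
@[simp] lemma aE_inv_val (s : S N) : ((aE N hN)⁻¹ s).val = aI s.val := rfl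
@[simp] lemma bE_inv_val (s : S N) : ((bE N hN)⁻¹ s).val = bI N s.val := rfl
@[simp] lemma xE_inv_val (s : S N) : ((xE N)⁻¹ s).val = xI s.val := rfl
@[simp] lemma yE_inv_val (s : S N) : ((yE N)⁻¹ s).val = yI s.val := rfl

end EquivDefs



section PermIdent

variable {N : ℕ} (hN : 2 ≤ N)

lemma aE_sq : aE N hN * aE N hN = xE N := by
  apply Equiv.ext; intro s; apply Subtype.ext
  obtain ⟨⟨w, m, l⟩, hok⟩ := s
  rcases w with _ | ⟨c, t⟩
  · simp [Equiv.Perm.mul_apply, aF, xF]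
  · rcases c with _ | c
    · rcases ok_zero_head hok with rfl | ⟨c', t', rfl, hc'⟩
      · simp [Equiv.Perm.mul_apply, aF, xF]
      · rcases c' with _ | c'
        · omega
        · simp [Equiv.Perm.mul_apply, aF, xF]
    · simp [Equiv.Perm.mul_apply, aF, xF]

lemma bE_pow_small : ∀ (j : ℕ), j + 1 < N → ∀ (s : S N) (u : List ℕ) (m l : ℤ),
    s.val = (u, m, l) → (u = [] ∨ ∃ t, u = 0 :: t) →
    ((bE N hN ^ (j+1)) s).val = ((j+1) :: u, m, l) := by
  intro j
  induction j with
  | zero =>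
    intro h s u m l hs hu
    rcases hu with rfl | ⟨t, rfl⟩ <;> simp [pow_one, hs, bF]
  | succ j ih =>
    intro h s u m l hs hu
    rw [pow_succ', Equiv.Perm.mul_apply]
    have h1 := ih (by omega) s u m l hs hu
    rw [bE_val, h1, bF, if_neg (show ¬ j + 1 + 1 = N by omega)]

lemma bE_pow_pop : ∀ (j : ℕ), ∀ (c : ℕ), c + 1 + (j + 1) = N → ∀ (s : S N) (t : List ℕ)
    (m l : ℤ), s.val = ((c+1) :: t, m, l) →
    ((bE N hN ^ (j+1)) s).val = (t, m, l + del t) := by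
  intro j
  induction j with
  | zero =>
    intro c hc s t m l hs
    rw [pow_one, bE_val, hs, bF, if_pos (by omega)]
  | succ j ih =>
    intro c hc s t m l hs
    rw [pow_succ, Equiv.Perm.mul_apply]
    have h1 : ((bE N hN) s).val = ((c+2) :: t, m, l) := by
      rw [bE_val, hs, bF, if_neg (by omega)]
    exact ih (c+1) (by omega) _ t m l h1

lemma bE_pow_N : bE N hN ^ N = yE N := by
  apply Equiv.ext; intro s; apply Subtype.ext
  have hsplit : bE N hN ^ N = bE N hN ^ ((N-2)+1) * bE N hN ^ 1 := by
    rw [← pow_add]; congr 1; omega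
  obtain ⟨⟨w, m, l⟩, hok⟩ := s
  rcases w with _ | ⟨c, t⟩
  · rw [hsplit, Equiv.Perm.mul_apply]
    have h1 : ((bE N hN ^ 1) ⟨([], m, l), hok⟩).val = ([1], m, l) := by
      rw [pow_one, bE_val, bF]
    rw [bE_pow_pop hN (N-2) 0 (by omega) _ [] m l h1]
    simp [yF]
  · rcases c with _ | c
    · rw [hsplit, Equiv.Perm.mul_apply]
      have h1 : ((bE N hN ^ 1) ⟨(0 :: t, m, l), hok⟩).val = (1 :: 0 :: t, m, l) := by
        rw [pow_one, bE_val, bF]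
      rw [bE_pow_pop hN (N-2) 0 (by omega) _ (0 :: t) m l h1]
      simp [yF]
    · have hcN : c + 1 < N := ok_head_lt hok
      have hsplit2 : bE N hN ^ N = bE N hN ^ (c+1) * bE N hN ^ ((N-c-2)+1) := by
        rw [← pow_add]; congr 1; omega
      rw [hsplit2, Equiv.Perm.mul_apply]
      have h1 := bE_pow_pop hN (N-c-2) c (by omega) ⟨((c+1) :: t, m, l), hok⟩ t m l rfl
      have h2 := bE_pow_small hN c hcN _ t m (l + del t) h1 (ok_ne_head hok (by omega))
      rw [h2]
      simp [yF, del_cons_ne _ _ (show c + 1 ≠ 0 by omega)]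

lemma rel1E : aE N hN * yE N * (aE N hN)⁻¹ * yE N = 1 := by
  apply Equiv.ext; intro s; apply Subtype.ext
  obtain ⟨⟨w, m, l⟩, hok⟩ := s
  simp only [Equiv.Perm.mul_apply, Equiv.Perm.one_apply, aE_val, yE_val, aE_inv_val]
  rcases w with _ | ⟨c, t⟩
  · simp [yF, aI, aF]
  · rcases c with _ | c
    · rcases ok_zero_head hok with h' | ⟨c', t', ht, hc'⟩
      · subst h'
        simp [yF, aI, aF]
      · subst ht
        rcases c' with _ | c'
        · omega
        · simp [yF, aI, aF]
    · simp [yF, aI, aF]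

lemma rel2E (hNe : Even N) : bE N hN * xE N * (bE N hN)⁻¹ * xE N = 1 := by
  have hodd : Odd (N - 1) := Nat.Even.sub_odd (by omega) hNe odd_one
  have hpow : ((-1 : ℤ)) ^ (N - 1) = -1 := Odd.neg_one_pow hodd
  have hsub : N - 1 = (N - 2) + 1 := by omega
  apply Equiv.ext; intro s; apply Subtype.ext
  obtain ⟨⟨w, m, l⟩, hok⟩ := s
  simp only [Equiv.Perm.mul_apply, Equiv.Perm.one_apply, bE_val, xE_val, bE_inv_val]
  rcases w with _ | ⟨c, t⟩
  · rw [show xF ([], m, l) = ([], m + 1, l) by simp [xF]]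
    rw [show bI N ([], m + 1, l) = ([N-1], m+1, l-1) from rfl]
    rw [show xF ([N-1], m+1, l-1) = ([N-1], m + 1 + (-1)^(N-1) * 1, l-1) by simp [xF, eps]]
    rw [hpow, hsub, bF, if_pos (by omega)]
    simp
  · rcases c with _ | c
    · rw [show xF (0::t, m, l) = (0::t, m + eps t, l) by simp [xF]]
      rw [show bI N (0::t, m + eps t, l) = ((N-1) :: 0 :: t, m + eps t, l + del t) from rfl]
      rw [show xF ((N-1) :: 0 :: t, m + eps t, l + del t)
            = ((N-1) :: 0 :: t, m + eps t + (-1)^(N-1) * eps (0 :: t), l + del t) by simp [xF]]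
      rw [hpow, hsub, bF, if_pos (by omega)]
      simp
    · rcases c with _ | c
      · rw [show xF (1::t, m, l) = (1::t, m + (-1) * eps t, l) by simp [xF]]
        rw [show bI N (1::t, m + (-1) * eps t, l) = (t, m + (-1) * eps t, l) from rfl]
        rw [show xF (t, m + (-1) * eps t, l) = (t, m + (-1) * eps t + eps t, l) by simp [xF, eps]]
        rcases ok_ne_head hok (by omega) with h' | ⟨t', ht⟩
        · subst h'; simp [bF]
        · subst ht; simp [bF]
      · have hcN : c + 2 < N := ok_head_lt hok
        rw [show xF ((c+2)::t, m, l) = ((c+2)::t, m + (-1)^(c+2) * eps t, l) by simp [xF]]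
        rw [show bI N ((c+2)::t, m + (-1)^(c+2) * eps t, l)
              = ((c+1)::t, m + (-1)^(c+2) * eps t, l) from rfl]
        rw [show xF ((c+1)::t, m + (-1)^(c+2) * eps t, l)
              = ((c+1)::t, m + (-1)^(c+2) * eps t + (-1)^(c+1) * eps t, l) by simp [xF]]
        rw [bF, if_neg (by omega)]
        simp [pow_succ]

lemma xE_zpow (m : ℤ) : ∀ (s : S N), ((xE N ^ m) s).val
    = (s.val.1, s.val.2.1 + m * eps s.val.1, s.val.2.2) := by
  induction m using Int.induction_on with
  | zero => intro s; simp
  | succ n ih =>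
    intro s
    rw [show ((n : ℤ) + 1) = (n + 1 : ℤ) from rfl, zpow_add_one, Equiv.Perm.mul_apply]
    rw [ih, xE_val]
    obtain ⟨⟨w, m0, l⟩, hok⟩ := s
    simp [xF]; ring
  | pred n ih =>
    intro s
    rw [zpow_sub_one, Equiv.Perm.mul_apply, ih, xE_inv_val]
    obtain ⟨⟨w, m0, l⟩, hok⟩ := s
    simp [xI]; ring

lemma yE_zpow (m : ℤ) : ∀ (s : S N), ((yE N ^ m) s).val
    = (s.val.1, s.val.2.1, s.val.2.2 + m * del s.val.1) := by
  induction m using Int.induction_on with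
  | zero => intro s; simp
  | succ n ih =>
    intro s
    rw [show ((n : ℤ) + 1) = (n + 1 : ℤ) from rfl, zpow_add_one, Equiv.Perm.mul_apply]
    rw [ih, yE_val]
    obtain ⟨⟨w, m0, l⟩, hok⟩ := s
    simp [yF]; ring
  | pred n ih =>
    intro s
    rw [zpow_sub_one, Equiv.Perm.mul_apply, ih, yE_inv_val]
    obtain ⟨⟨w, m0, l⟩, hok⟩ := s
    simp [yI]; ring

end PermIdent

end PkModel

namespace PkGroup
open PkModel

variable (k : ℕ)

def A : Pk k := PresentedGroup.of 0
def B : Pk k := PresentedGroup.of 1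
def X : Pk k := (A k) ^ 2
def Y : Pk k := (B k) ^ (2 ^ k)

variable {k}

lemma mk_rel_one {r : FreeGroup (Fin 2)} (hr : r ∈ PkRels k) :
    PresentedGroup.mk (PkRels k) r = 1 :=
  (QuotientGroup.eq_one_iff r).2 (Subgroup.subset_normalClosure hr)

lemma rel1 : A k * Y k * (A k)⁻¹ * Y k = 1 := by
  have h := mk_rel_one (k := k) (Set.mem_insert _ _)
  simpa [map_mul, map_pow, map_inv, A, B, Y, PresentedGroup.of] using h

lemma rel2 : B k * X k * (B k)⁻¹ * X k = 1 := by
  have h := mk_rel_one (k := k) (Set.mem_insert_of_mem _ rfl)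
  simpa [map_mul, map_pow, map_inv, A, B, X, PresentedGroup.of] using h

lemma conjA : A k * Y k * (A k)⁻¹ = (Y k)⁻¹ := by
  have h := rel1 (k := k)
  rw [mul_eq_one_iff_eq_inv] at h
  exact h

lemma conjB : B k * X k * (B k)⁻¹ = (X k)⁻¹ := by
  have h := rel2 (k := k)
  rw [mul_eq_one_iff_eq_inv] at h
  exact h

lemma semiconjA : SemiconjBy (A k) (Y k) (Y k)⁻¹ := by
  have h := conjA (k := k)
  unfold SemiconjBy
  rw [← h]; group

lemma semiconjB : SemiconjBy (B k) (X k) (X k)⁻¹ := by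
  have h := conjB (k := k)
  unfold SemiconjBy
  rw [← h]; group

/-- `A * Y^l * A⁻¹ = Y^(-l)` -/
lemma conjA_zpow (l : ℤ) : A k * (Y k) ^ l * (A k)⁻¹ = (Y k) ^ (-l) := by
  have h := (semiconjA (k := k)).zpow_right l
  unfold SemiconjBy at h
  rw [inv_zpow'] at h
  rw [mul_inv_eq_iff_eq_mul, h]

lemma conjB_zpow (m : ℤ) : B k * (X k) ^ m * (B k)⁻¹ = (X k) ^ (-m) := by
  have h := (semiconjB (k := k)).zpow_right m
  unfold SemiconjBy at h
  rw [inv_zpow'] at h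
  rw [mul_inv_eq_iff_eq_mul, h]

/-- move `Y^l` across `A` -/
lemma moveYA (l : ℤ) : (Y k) ^ l * A k = A k * (Y k) ^ (-l) := by
  have h := conjA_zpow (k := k) (-l)
  rw [neg_neg] at h
  rw [← h]; group

/-- move `X^m` across `B` -/
lemma moveXB_one (m : ℤ) : (X k) ^ m * B k = B k * (X k) ^ (-m) := by
  have h := conjB_zpow (k := k) (-m)
  rw [neg_neg] at h
  rw [← h]; group

lemma commAX : Commute (A k) (X k) := (Commute.pow_self (A k) 2).symm

lemma commBY : Commute (B k) (Y k) := (Commute.pow_self (B k) (2 ^ k)).symm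

lemma moveXA (m : ℤ) : (X k) ^ m * A k = A k * (X k) ^ m :=
  ((commAX (k := k)).zpow_right m).symm.eq

lemma moveYB (l : ℤ) : (Y k) ^ l * B k = B k * (Y k) ^ l :=
  ((commBY (k := k)).zpow_right l).symm.eq

/-- `B^2` commutes with `X`. -/
lemma commB2X : Commute ((B k) ^ 2) (X k) := by
  have h := conjB (k := k)
  have h4 : (B k)^2 * X k * ((B k)^2)⁻¹ = X k := by
    calc (B k)^2 * X k * ((B k)^2)⁻¹
        = B k * (B k * X k * (B k)⁻¹) * (B k)⁻¹ := by rw [pow_two]; group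
      _ = B k * (X k)⁻¹ * (B k)⁻¹ := by rw [h]
      _ = (B k * X k * (B k)⁻¹)⁻¹ := by group
      _ = X k := by rw [h]; group
  rw [mul_inv_eq_iff_eq_mul] at h4
  exact h4

lemma commXY (hk : 0 < k) : Commute (X k) (Y k) := by
  have hk2 : (2:ℕ) ^ k = 2 * 2 ^ (k - 1) := by
    conv_lhs => rw [show k = (k-1)+1 by omega]
    rw [pow_succ]; ring
  have h : (B k) ^ (2 ^ k) = ((B k) ^ 2) ^ (2 ^ (k - 1)) := by
    rw [hk2, pow_mul]
  unfold Y
  rw [h]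
  exact ((commB2X (k := k)).pow_left _).symm

/-- move `X^m` across `B^c`. -/
lemma moveXB (m : ℤ) : ∀ (c : ℕ), (X k) ^ m * (B k) ^ c = (B k) ^ c * (X k) ^ (m * (-1) ^ c) := by
  intro c
  induction c with
  | zero => simp
  | succ c ih =>
    calc (X k) ^ m * (B k) ^ (c+1) = ((X k) ^ m * (B k) ^ c) * B k := by rw [pow_succ]; group
      _ = (B k) ^ c * ((X k) ^ (m * (-1) ^ c) * B k) := by rw [ih]; group
      _ = (B k) ^ c * (B k * (X k) ^ (-(m * (-1) ^ c))) := by rw [moveXB_one]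
      _ = (B k) ^ (c+1) * (X k) ^ (m * (-1) ^ (c+1)) := by
          rw [pow_succ]
          have : -(m * (-1) ^ c) = m * (-1) ^ (c + 1) := by rw [pow_succ]; ring
          rw [this]; group

end PkGroup

namespace PkGroup
open PkModel

variable (k : ℕ)

/-- canonical representative of a syllable -/
def gen : ℕ → Pk k := fun c => if c = 0 then A k else (B k) ^ c

def σw : List ℕ → Pk k := fun w => (w.map (gen k)).prod

def σr : Raw → Pk k := fun r => σw k r.1 * (X k) ^ r.2.1 * (Y k) ^ r.2.2

variable {k}

@[simp] lemma gen_zero : gen k 0 = A k := rfl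
lemma gen_succ (c : ℕ) : gen k (c + 1) = (B k) ^ (c + 1) := rfl

@[simp] lemma σw_nil : σw k [] = 1 := rfl
lemma σw_cons (c : ℕ) (t : List ℕ) : σw k (c :: t) = gen k c * σw k t := by
  simp [σw]

lemma σw_append_single (u : List ℕ) (c : ℕ) : σw k (u ++ [c]) = σw k u * gen k c := by
  simp [σw]

lemma σr_def (w : List ℕ) (m l : ℤ) : σr k (w, m, l) = σw k w * (X k) ^ m * (Y k) ^ l := rfl

lemma σr_cons (c : ℕ) (t : List ℕ) (m l : ℤ) :
    σr k (c :: t, m, l) = gen k c * σr k (t, m, l) := by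
  rw [σr_def, σr_def, σw_cons]; group

lemma σr_nil_eq (m l : ℤ) : σr k ([], m, l) = (X k) ^ m * (Y k) ^ l := by
  rw [σr_def, σw_nil]; group

/-- move `X^m` across a word -/
lemma moveXW (m : ℤ) : ∀ (w : List ℕ), (X k) ^ m * σw k w = σw k w * (X k) ^ (m * eps w) := by
  intro w
  induction w generalizing m with
  | nil => simp
  | cons c t ih =>
    rw [σw_cons, eps_cons]
    rcases c with _ | c
    · rw [show m * ((-1:ℤ) ^ (0:ℕ) * eps t) = m * eps t by ring]
      calc (X k) ^ m * (gen k 0 * σw k t) = ((X k) ^ m * A k) * σw k t := by rw [gen_zero]; group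
        _ = A k * ((X k) ^ m * σw k t) := by rw [moveXA]; group
        _ = A k * (σw k t * (X k) ^ (m * eps t)) := by rw [ih]
        _ = gen k 0 * σw k t * (X k) ^ (m * eps t) := by rw [gen_zero]; group
    · rw [show m * ((-1:ℤ) ^ (c+1) * eps t) = m * (-1) ^ (c+1) * eps t by ring]
      calc (X k) ^ m * (gen k (c+1) * σw k t)
          = ((X k) ^ m * (B k) ^ (c+1)) * σw k t := by rw [gen_succ]; group
        _ = (B k) ^ (c+1) * ((X k) ^ (m * (-1)^(c+1)) * σw k t) := by rw [moveXB]; group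
        _ = (B k) ^ (c+1) * (σw k t * (X k) ^ (m * (-1)^(c+1) * eps t)) := by rw [ih]
        _ = gen k (c+1) * σw k t * (X k) ^ (m * (-1) ^ (c+1) * eps t) := by rw [gen_succ]; group

/-- move `Y^l` across a word -/
lemma moveYW (l : ℤ) : ∀ (w : List ℕ), (Y k) ^ l * σw k w = σw k w * (Y k) ^ (l * del w) := by
  intro w
  induction w generalizing l with
  | nil => simp
  | cons c t ih =>
    rw [σw_cons]
    rcases c with _ | c
    · calc (Y k) ^ l * (gen k 0 * σw k t) = ((Y k) ^ l * A k) * σw k t := by rw [gen_zero]; group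
        _ = A k * ((Y k) ^ (-l) * σw k t) := by rw [moveYA]; group
        _ = A k * (σw k t * (Y k) ^ (-l * del t)) := by rw [ih]
        _ = gen k 0 * σw k t * (Y k) ^ (l * del (0 :: t)) := by
            rw [gen_zero, del_cons_zero]
            have : -l * del t = l * -del t := by ring
            rw [this]; group
    · have hyB : ∀ (l' : ℤ) (c' : ℕ), (Y k) ^ l' * (B k) ^ c' = (B k) ^ c' * (Y k) ^ l' := by
        intro l' c'
        exact (((commBY (k := k)).pow_left c').zpow_right l').symm.eq
      calc (Y k) ^ l * (gen k (c+1) * σw k t)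
          = ((Y k) ^ l * (B k) ^ (c+1)) * σw k t := by rw [gen_succ]; group
        _ = (B k) ^ (c+1) * ((Y k) ^ l * σw k t) := by rw [hyB]; group
        _ = (B k) ^ (c+1) * (σw k t * (Y k) ^ (l * del t)) := by rw [ih]
        _ = gen k (c+1) * σw k t * (Y k) ^ (l * del ((c+1) :: t)) := by
            rw [gen_succ, del_cons_ne _ _ (by omega)]; group

lemma N_two_le (hk : 0 < k) : 2 ≤ 2 ^ k := by
  calc 2 = 2 ^ 1 := rfl
  _ ≤ 2 ^ k := Nat.pow_le_pow_right (by omega) (by omega)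

lemma N_even (hk : 0 < k) : Even (2 ^ k) := by
  refine ⟨2 ^ (k - 1), ?_⟩
  conv_lhs => rw [show k = (k-1)+1 by omega]
  rw [pow_succ]; ring

/-- the homomorphism to permutations of normal forms -/
def φ (hk : 0 < k) : Pk k →* Equiv.Perm (S (2 ^ k)) := by
  refine PresentedGroup.toGroup (f := ![aE (2 ^ k) (N_two_le hk), bE (2 ^ k) (N_two_le hk)]) ?_
  intro r hr
  simp only [PkRels, Set.mem_insert_iff, Set.mem_singleton_iff] at hr
  rcases hr with h | h
  · subst h
    simp only [map_mul, map_pow, map_inv, FreeGroup.lift_apply_of, Matrix.cons_val_zero,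
      Matrix.cons_val_one, Matrix.head_cons]
    rw [bE_pow_N]
    exact rel1E (N_two_le hk)
  · subst h
    simp only [map_mul, map_pow, map_inv, FreeGroup.lift_apply_of, Matrix.cons_val_zero,
      Matrix.cons_val_one, Matrix.head_cons]
    rw [show aE (2^k) (N_two_le hk) ^ 2 = xE (2^k) by rw [pow_two, aE_sq]]
    exact rel2E (N_two_le hk) (N_even hk)

variable (hk : 0 < k)

lemma φ_A : φ hk (A k) = aE (2 ^ k) (N_two_le hk) := by
  unfold φ A
  rw [PresentedGroup.toGroup.of]
  rfl

lemma φ_B : φ hk (B k) = bE (2 ^ k) (N_two_le hk) := by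
  unfold φ B
  rw [PresentedGroup.toGroup.of]
  rfl

lemma φ_X : φ hk (X k) = xE (2 ^ k) := by
  unfold X
  rw [map_pow, φ_A, pow_two, aE_sq]

lemma φ_Y : φ hk (Y k) = yE (2 ^ k) := by
  unfold Y
  rw [map_pow, φ_B, bE_pow_N]

end PkGroup

namespace PkGroup
open PkModel

variable {k : ℕ} (hk : 0 < k)

/-- the base point: empty normal form -/
def ε : S (2 ^ k) := ⟨([], 0, 0), ok_nil⟩

lemma σr_eps : σr k (ε (k := k)).val = 1 := by
  show σr k ([], 0, 0) = 1
  rw [σr_nil_eq]; group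

/-- action of `a` matches left multiplication by `A` -/
lemma actA (s : S (2 ^ k)) :
    σr k ((aE (2 ^ k) (N_two_le hk) s).val) = A k * σr k s.val := by
  obtain ⟨⟨w, m, l⟩, hok⟩ := s
  rw [aE_val]
  rcases w with _ | ⟨c, t⟩
  · show σr k ([0], m, l) = A k * σr k ([], m, l)
    rw [σr_cons, gen_zero]
  · rcases c with _ | c
    · show σr k (t, m + eps t, l) = A k * σr k (0 :: t, m, l)
      rw [σr_cons, gen_zero, σr_def, σr_def]
      have h1 : A k * (A k * (σw k t * (X k) ^ m * (Y k) ^ l))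
          = (X k) ^ (1:ℤ) * σw k t * (X k) ^ m * (Y k) ^ l := by
        rw [zpow_one]
        show A k * (A k * (σw k t * (X k) ^ m * (Y k) ^ l))
            = (A k)^2 * σw k t * (X k) ^ m * (Y k) ^ l
        rw [pow_two]
        group
      rw [h1]
      have h2 : (X k) ^ (1:ℤ) * σw k t = σw k t * (X k) ^ (eps t) := by
        have := moveXW (k := k) 1 t
        simpa using this
      rw [h2]
      conv_rhs => rw [mul_assoc (σw k t) ((X k) ^ eps t), ← zpow_add, add_comm (eps t) m]
    · show σr k (0 :: (c+1) :: t, m, l) = A k * σr k ((c+1) :: t, m, l)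
      rw [σr_cons, gen_zero]

/-- action of `b` matches left multiplication by `B` -/
lemma actB (s : S (2 ^ k)) :
    σr k ((bE (2 ^ k) (N_two_le hk) s).val) = B k * σr k s.val := by
  obtain ⟨⟨w, m, l⟩, hok⟩ := s
  rw [bE_val]
  rcases w with _ | ⟨c, t⟩
  · show σr k ([1], m, l) = B k * σr k ([], m, l)
    rw [σr_cons, gen_succ, pow_one]
  · rcases c with _ | c
    · show σr k (1 :: 0 :: t, m, l) = B k * σr k (0 :: t, m, l)
      rw [σr_cons, gen_succ, pow_one]
    · show σr k (bF (2^k) ((c+1) :: t, m, l)) = B k * σr k ((c+1) :: t, m, l)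
      rw [bF]
      by_cases hc : c + 2 = 2 ^ k
      · rw [if_pos hc]
        show σr k (t, m, l + del t) = B k * σr k ((c+1) :: t, m, l)
        rw [σr_cons, gen_succ, σr_def, σr_def]
        have h1 : B k * ((B k) ^ (c+1) * (σw k t * (X k) ^ m * (Y k) ^ l))
            = (Y k) ^ (1:ℤ) * σw k t * (X k) ^ m * (Y k) ^ l := by
          rw [zpow_one]
          show B k * ((B k) ^ (c+1) * (σw k t * (X k) ^ m * (Y k) ^ l))
              = (B k) ^ (2 ^ k) * σw k t * (X k) ^ m * (Y k) ^ l
          rw [show (2:ℕ) ^ k = c + 2 from hc.symm, pow_succ]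
          group
        rw [h1]
        have h2 : (Y k) ^ (1:ℤ) * σw k t = σw k t * (Y k) ^ (del t) := by
          have := moveYW (k := k) 1 t
          simpa using this
        rw [h2]
        have h3 : (Y k) ^ (del t) * (X k) ^ m = (X k) ^ m * (Y k) ^ (del t) :=
          (((commXY hk).zpow_left m).zpow_right (del t)).symm.eq
        conv_rhs => rw [mul_assoc (σw k t), h3, ← mul_assoc,
          mul_assoc (σw k t * (X k) ^ m), ← zpow_add, add_comm (del t) l]
      · rw [if_neg hc]
        show σr k ((c+2) :: t, m, l) = B k * σr k ((c+1) :: t, m, l)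
        rw [σr_cons, σr_cons, gen_succ, gen_succ, pow_succ]
        group

/-- reconstruction: `σr` of the action of `p` on `s` is `p * σr s`. -/
lemma recon (p : Pk k) : ∀ s : S (2 ^ k), σr k ((φ hk p s).val) = p * σr k s.val := by
  let T : Subgroup (Pk k) :=
    { carrier := {p | ∀ s : S (2 ^ k), σr k ((φ hk p s).val) = p * σr k s.val}
      one_mem' := by intro s; simp
      mul_mem' := by
        intro p q hp hq s
        rw [map_mul, Equiv.Perm.mul_apply, hp, hq]
        group
      inv_mem' := by
        intro p hp s
        have h := hp ((φ hk p⁻¹) s)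
        rw [map_inv (φ hk) p, (show ∀ (f : Equiv.Perm (S (2 ^ k))) x, f (f⁻¹ x) = x from fun f x => f.apply_symm_apply x)] at h
        rw [map_inv (φ hk) p, h, inv_mul_cancel_left] }
  have : p ∈ T := by
    apply PresentedGroup.generated_by
    intro j
    fin_cases j
    · intro s
      show σr k ((φ hk (A k) s).val) = A k * σr k s.val
      rw [φ_A]
      exact actA hk s
    · intro s
      show σr k ((φ hk (B k) s).val) = B k * σr k s.val
      rw [φ_B]
      exact actB hk s
  exact this

/-- every element is represented by its normal form -/
lemma recon_eps (p : Pk k) : p = σr k ((φ hk p ε).val) := by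
  rw [recon hk p ε, σr_eps, mul_one]

/-- `φ (X^m * Y^l)` applied to the base point -/
lemma nf_xy (m l : ℤ) : ((φ hk ((X k) ^ m * (Y k) ^ l)) ε).val = ([], m, l) := by
  rw [map_mul, map_zpow, map_zpow, φ_X, φ_Y, Equiv.Perm.mul_apply]
  have h1 := yE_zpow (N := 2^k) l (ε (k := k))
  have h2 := xE_zpow (N := 2^k) m ((yE (2^k) ^ l) ε)
  rw [h2, h1]
  show (([] : List ℕ), 0 + m * eps [], (0 + l * del [] : ℤ)) = ([], m, l)
  simp

end PkGroup

namespace PkGroup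
open PkModel

variable {k : ℕ} (hk : 0 < k)

lemma concat : ∀ (w : List ℕ), ok (2 ^ k) w → ∀ (m l : ℤ) (s : S (2 ^ k)),
    (∀ cl ∈ w.getLast?, ∀ ch ∈ s.val.1.head?, Alt cl ch) →
    ∃ m' l', ((φ hk (σr k (w, m, l))) s).val = (w ++ s.val.1, m', l') := by
  intro w
  induction w with
  | nil =>
    intro _ m l s _
    rw [σr_nil_eq, map_mul, map_zpow, map_zpow, φ_X, φ_Y, Equiv.Perm.mul_apply]
    refine ⟨s.val.2.1 + m * eps s.val.1, s.val.2.2 + l * del s.val.1, ?_⟩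
    rw [xE_zpow, yE_zpow]
    simp

  | cons c t ih =>
    intro hok m l s hcomp
    have hokt : ok (2 ^ k) t := ok_tail hok
    have hcompt : ∀ cl ∈ t.getLast?, ∀ ch ∈ s.val.1.head?, Alt cl ch := by
      rcases t with _ | ⟨d, t'⟩
      · intro cl hcl; simp at hcl
      · intro cl hcl ch hch
        refine hcomp cl ?_ ch hch
        rwa [List.getLast?_cons_cons]
    obtain ⟨m', l', hIH⟩ := ih hokt m l s hcompt
    rw [σr_cons, map_mul, Equiv.Perm.mul_apply]
    set s' := (φ hk (σr k (t, m, l))) s with hs'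
    -- `s'` has value `(t ++ s.val.1, m', l')`
    -- head of `t ++ s.val.1` is compatible with `c`
    rcases c with _ | d
    · -- c = 0 : prepend `0`
      rw [gen_zero, φ_A]
      refine ⟨m', l', ?_⟩
      rw [aE_val, hIH]
      have hword : t ++ s.val.1 = [] ∨ ∃ c' t'', t ++ s.val.1 = (c' + 1) :: t'' := by
        rcases t with _ | ⟨d', t'⟩
        · rcases hs1 : s.val.1 with _ | ⟨ch, r⟩
          · exact Or.inl rfl
          · have : Alt 0 ch := by
              apply hcomp 0 (by simp) ch
              rw [hs1]; simp
            have hch : ch ≠ 0 := by unfold Alt at this; tauto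
            obtain ⟨c'', rfl⟩ := Nat.exists_eq_succ_of_ne_zero hch
            exact Or.inr ⟨c'', r, by simp⟩
        · have hd' : d' ≠ 0 := by
            have := (List.isChain_cons_cons.1 hok.2).1
            unfold Alt at this; tauto
          obtain ⟨c'', rfl⟩ := Nat.exists_eq_succ_of_ne_zero hd'
          exact Or.inr ⟨c'', t' ++ s.val.1, by simp⟩
      rcases hword with hw | ⟨c', t'', hw⟩ <;> rw [hw] <;> simp [aF, hw]
    · -- c = d+1 : prepend `d+1` via `bE ^ (d+1)`
      rw [gen_succ, map_pow, φ_B]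
      refine ⟨m', l', ?_⟩
      have hu : t ++ s.val.1 = [] ∨ ∃ t'', t ++ s.val.1 = 0 :: t'' := by
        rcases t with _ | ⟨d', t'⟩
        · rcases hs1 : s.val.1 with _ | ⟨ch, r⟩
          · exact Or.inl rfl
          · have : Alt (d+1) ch := by
              apply hcomp (d+1) (by simp) ch
              rw [hs1]; simp
            have hch : ch = 0 := by unfold Alt at this; tauto
            subst hch
            exact Or.inr ⟨r, by simp⟩
        · have hd' : d' = 0 := by
            have := (List.isChain_cons_cons.1 hok.2).1
            unfold Alt at this; tauto
          subst hd'
          exact Or.inr ⟨t' ++ s.val.1, by simp⟩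
      have := bE_pow_small (N := 2 ^ k) (N_two_le hk) d (ok_head_lt hok) s'
        (t ++ s.val.1) m' l' hIH hu
      rw [this]
      simp

/-- normal form of an `σr` value -/
lemma nf_σr (w : List ℕ) (hok : ok (2 ^ k) w) (m l : ℤ) :
    ((φ hk (σr k (w, m, l))) ε).val = (w, m, l) := by
  obtain ⟨m', l', h⟩ := concat hk w hok m l ε (by intro cl hcl ch hch; simp [ε] at hch)
  have hε1 : (ε (k := k)).val.1 = [] := rfl
  rw [hε1, List.append_nil] at h
  have hp : σr k (w, m, l) = σr k (w, m', l') := by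
    conv_lhs => rw [recon_eps hk (σr k (w, m, l))]
    rw [h]
  have hxy : (X k) ^ m * (Y k) ^ l = (X k) ^ m' * (Y k) ^ l' := by
    have h2 := hp
    rw [σr_def, σr_def, mul_assoc, mul_assoc] at h2
    exact mul_left_cancel h2
  have h3 : (([]:List ℕ), m, l) = ([], m', l') := by
    have := congrArg (fun q => ((φ hk q) ε).val) hxy
    simpa only [nf_xy hk] using this
  have h4 : m = m' ∧ l = l' := by simpa [Prod.ext_iff] using h3
  rw [h, ← h4.1, ← h4.2]

lemma σr_ne_one (hk : 0 < k) (w : List ℕ) (hok : ok (2 ^ k) w) (hw : w ≠ []) (m l : ℤ) :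
    σr k (w, m, l) ≠ 1 := by
  intro h
  have h1 := nf_σr hk w hok m l
  rw [h, map_one, Equiv.Perm.one_apply] at h1
  have h2 : (([]:List ℕ), (0:ℤ), (0:ℤ)) = (w, m, l) := h1
  have h3 := congrArg (fun r => r.1) h2
  exact hw h3.symm

lemma σr_nil_eq_one (hk : 0 < k) (m l : ℤ) (h : σr k ([], m, l) = 1) : m = 0 ∧ l = 0 := by
  have h1 := nf_σr hk [] ok_nil m l
  rw [h, map_one, Equiv.Perm.one_apply] at h1
  have h2 : (([] : List ℕ), (0:ℤ), (0:ℤ)) = ([], m, l) := h1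
  have h4 : (0:ℤ) = m ∧ (0:ℤ) = l := by simpa [Prod.ext_iff] using h2
  exact ⟨h4.1.symm, h4.2.symm⟩

end PkGroup

namespace PkGroup
open PkModel

variable {k : ℕ}

lemma σw_single (c : ℕ) : σw k [c] = gen k c := by simp [σw]

lemma swapYX (hk : 0 < k) (a b : ℤ) : (Y k) ^ a * (X k) ^ b = (X k) ^ b * (Y k) ^ a :=
  (((commXY hk).zpow_left b).zpow_right a).symm.eq

lemma zpow_pow (g : Pk k) (E : ℤ) (n : ℕ) : (g ^ E) ^ n = g ^ (E * n) := by
  rw [← zpow_natCast (g ^ E) n, ← zpow_mul]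

lemma BN_zpow (q : ℤ) : (Y k) ^ q = (B k) ^ (((2 ^ k : ℕ) : ℤ) * q) := by
  show ((B k) ^ (2 ^ k : ℕ)) ^ q = _
  rw [← zpow_natCast (B k) (2 ^ k), ← zpow_mul]

lemma moveXBz_even (t : ℤ) (ht : Even t) (e : ℤ) :
    (B k) ^ t * (X k) ^ e = (X k) ^ e * (B k) ^ t := by
  obtain ⟨u, hu⟩ := ht
  have h2 : (B k) ^ t = ((B k) ^ (2:ℕ)) ^ u := by
    rw [← zpow_natCast (B k) 2, ← zpow_mul]
    congr 1
    omega
  rw [h2]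
  exact (((commB2X (k := k)).zpow_left u).zpow_right e).eq

lemma moveXBz_odd (t : ℤ) (ht : Odd t) (e : ℤ) :
    (B k) ^ t * (X k) ^ e = (X k) ^ (-e) * (B k) ^ t := by
  obtain ⟨u, hu⟩ := ht
  have h3 : B k * (X k) ^ e = (X k) ^ (-e) * B k := by
    have h := conjB_zpow (k := k) e
    rw [mul_inv_eq_iff_eq_mul] at h
    exact h
  have h2 : (B k) ^ t = (B k) ^ (2 * u) * B k := by
    rw [hu, zpow_add_one]
  rw [h2]
  calc (B k) ^ (2*u) * B k * (X k) ^ e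
      = (B k) ^ (2*u) * (B k * (X k) ^ e) := by group
    _ = (B k) ^ (2*u) * ((X k) ^ (-e) * B k) := by rw [h3]
    _ = ((B k) ^ (2*u) * (X k) ^ (-e)) * B k := by group
    _ = ((X k) ^ (-e) * (B k) ^ (2*u)) * B k := by rw [moveXBz_even (2*u) ⟨u, by ring⟩]
    _ = (X k) ^ (-e) * ((B k) ^ (2*u) * B k) := by group

lemma ok_single {c : ℕ} (hc : c < 2 ^ k) : ok (2 ^ k) [c] :=
  ⟨by intro d hd; simp at hd; omega, List.isChain_singleton _⟩

/-- `X^M * B^t ≠ 1` when `t ≠ 0`. -/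
lemma endB (hk : 0 < k) (M t : ℤ) (ht : t ≠ 0) : (X k) ^ M * (B k) ^ t ≠ 1 := by
  have hN0 : (0:ℤ) < ((2 ^ k : ℕ) : ℤ) := by positivity
  set r : ℤ := t % ((2 ^ k : ℕ) : ℤ) with hr
  set q : ℤ := t / ((2 ^ k : ℕ) : ℤ) with hq
  have hdecomp : r + ((2 ^ k : ℕ) : ℤ) * q = t := Int.emod_add_mul_ediv t _
  have hr0 : 0 ≤ r := Int.emod_nonneg t (by omega)
  have hrN : r < ((2 ^ k : ℕ) : ℤ) := Int.emod_lt_of_pos t hN0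
  have hBt : (B k) ^ t = (B k) ^ r * (Y k) ^ q := by
    rw [BN_zpow, ← zpow_add, hdecomp]
  set rn : ℕ := r.toNat with hrndef
  have hrn : (rn : ℤ) = r := Int.toNat_of_nonneg hr0
  have hBr : (B k) ^ r = (B k) ^ rn := by rw [← hrn, zpow_natCast]
  intro hcontra
  rw [hBt, hBr, ← mul_assoc, moveXB] at hcontra
  rcases hrncases : rn with _ | c
  · rw [hrncases] at hcontra
    have hσ : σr k ([], M * (-1) ^ (0:ℕ), q) = 1 := by
      rw [σr_nil_eq]
      simpa using hcontra
    obtain ⟨-, hq0⟩ := σr_nil_eq_one hk _ _ hσ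
    have hr00 : r = 0 := by omega
    have ht0 : t = 0 := by rw [← hdecomp, hr00, hq0]; ring
    exact ht ht0
  · have hσ : σr k ([c+1], M * (-1) ^ rn, q) = 1 := by
      rw [σr_def, σw_single, gen_succ, ← hrncases]
      exact hcontra
    have hcN : c + 1 < 2 ^ k := by omega
    exact σr_ne_one hk _ (ok_single hcN) (by simp) _ _ hσ

/-- a length-one word `[0]` cannot give torsion -/
lemma len1_zero (hk : 0 < k) (m l : ℤ) (n : ℕ) (hn : 0 < n)
    (h : (σr k ([0], m, l)) ^ n = 1) : False := by
  set p := σr k ([0], m, l) with hpdef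
  have hp : p = A k * ((X k) ^ m * (Y k) ^ l) := by
    rw [hpdef, σr_cons, σr_nil_eq, gen_zero]
  have hX : A k * A k = (X k) ^ (1:ℤ) := by
    rw [zpow_one, show X k = A k ^ 2 from rfl, pow_two]
  have hsq : p * p = (X k) ^ (2*m+1) := by
    rw [hp]
    calc (A k * ((X k)^m * (Y k)^l)) * (A k * ((X k)^m * (Y k)^l))
        = A k * (X k)^m * ((Y k)^l * A k) * ((X k)^m * (Y k)^l) := by group
      _ = A k * (X k)^m * (A k * (Y k)^(-l)) * ((X k)^m * (Y k)^l) := by rw [moveYA]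
      _ = A k * ((X k)^m * A k) * ((Y k)^(-l) * (X k)^m * (Y k)^l) := by group
      _ = A k * (A k * (X k)^m) * ((Y k)^(-l) * (X k)^m * (Y k)^l) := by rw [moveXA]
      _ = (A k * A k) * (X k)^m * (((Y k)^(-l) * (X k)^m) * (Y k)^l) := by group
      _ = (A k * A k) * (X k)^m * (((X k)^m * (Y k)^(-l)) * (Y k)^l) := by
          rw [swapYX hk (-l) m]
      _ = (A k * A k) * (((X k)^m * (X k)^m) * ((Y k)^(-l) * (Y k)^l)) := by group
      _ = (X k) ^ (1:ℤ) * (((X k)^(m+m)) * ((Y k)^(-l+l))) := by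
          rw [hX, ← zpow_add, ← zpow_add]
      _ = (X k) ^ (2*m+1) := by
          rw [neg_add_cancel, zpow_zero, mul_one, ← zpow_add]
          congr 1
          ring
  rcases Nat.even_or_odd n with ⟨q, hnq⟩ | ⟨q, hnq⟩
  · have hpn : p ^ n = (X k) ^ ((2*m+1) * q) := by
      rw [show n = 2 * q by omega, pow_mul, pow_two, hsq, zpow_pow]
    have hσ : σr k ([], (2*m+1) * q, 0) = 1 := by
      rw [σr_nil_eq, zpow_zero, mul_one, ← hpn, h]
    obtain ⟨h1, -⟩ := σr_nil_eq_one hk _ _ hσ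
    have : q = 0 := by
      rcases mul_eq_zero.1 h1 with h' | h'
      · omega
      · exact_mod_cast h'
    omega
  · have hpn : p ^ n = σr k ([0], (2*m+1) * q + m, l) := by
      rw [show n = 2 * q + 1 by omega, pow_succ, pow_mul, pow_two, hsq, zpow_pow, hp]
      rw [σr_cons, σr_nil_eq, gen_zero]
      calc (X k) ^ ((2*m+1)*q) * (A k * ((X k)^m * (Y k)^l))
          = ((X k) ^ ((2*m+1)*q) * A k) * ((X k)^m * (Y k)^l) := by group
        _ = (A k * (X k) ^ ((2*m+1)*q)) * ((X k)^m * (Y k)^l) := by rw [moveXA]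
        _ = A k * ((X k) ^ ((2*m+1)*q) * (X k)^m * (Y k)^l) := by group
        _ = A k * ((X k) ^ ((2*m+1)*q + m) * (Y k)^l) := by rw [← zpow_add]
    rw [hpn] at h
    exact σr_ne_one hk _ (ok_single (by positivity)) (by simp) _ _ h

/-- a length-one word `[c+1]` cannot give torsion -/
lemma len1_succ (hk : 0 < k) (c : ℕ) (hc : c + 1 < 2 ^ k) (m l : ℤ) (n : ℕ) (hn : 0 < n)
    (h : (σr k ([c+1], m, l)) ^ n = 1) : False := by
  set s : ℤ := ((c:ℤ)+1) + ((2 ^ k : ℕ) : ℤ) * l with hsdef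
  set M : ℤ := m * (-1) ^ (c+1) with hMdef
  have hs0 : s ≠ 0 := by
    have hN2 : (2:ℤ) ≤ ((2 ^ k : ℕ) : ℤ) := by exact_mod_cast N_two_le hk
    rcases le_or_gt 0 l with hl | hl
    · have : 0 ≤ ((2 ^ k : ℕ) : ℤ) * l := mul_nonneg (by omega) hl
      omega
    · have h1 : l ≤ -1 := by omega
      have : ((2 ^ k : ℕ) : ℤ) * l ≤ ((2 ^ k : ℕ) : ℤ) * (-1) :=
        mul_le_mul_of_nonneg_left h1 (by omega)
      have hcN : (c:ℤ) + 1 < ((2 ^ k : ℕ) : ℤ) := by exact_mod_cast hc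
      omega
  have hform : σr k ([c+1], m, l) = (X k) ^ M * (B k) ^ s := by
    have h1 : (X k) ^ M * (B k) ^ ((c:ℤ)+1) = (B k) ^ ((c:ℤ)+1) * (X k) ^ m := by
      have h2 : (B k) ^ ((c:ℤ)+1) = (B k) ^ (c+1 : ℕ) := by
        rw [← zpow_natCast]
        norm_cast
      rw [h2, moveXB]
      have hone : ((-1:ℤ)) ^ (c+1) * (-1) ^ (c+1) = 1 := by
        rw [← pow_add]
        exact Even.neg_one_pow ⟨c+1, by ring⟩
      have hM2 : M * (-1:ℤ) ^ (c+1) = m := by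
        rw [hMdef]
        calc m * (-1:ℤ) ^ (c+1) * (-1) ^ (c+1) = m * ((-1:ℤ) ^ (c+1) * (-1) ^ (c+1)) := by ring
          _ = m := by rw [hone, mul_one]
      rw [hM2]
    rw [σr_def, σw_single, gen_succ]
    rw [hsdef, zpow_add, ← mul_assoc, h1, BN_zpow]
    have h3 : (B k) ^ (c+1:ℕ) = (B k) ^ ((c:ℤ)+1) := by
      rw [← zpow_natCast]; norm_cast
    rw [h3]
  -- parity of `s` matches parity of `c+1` since `2^k` is even
  have hNeZ : Even (((2 ^ k : ℕ) : ℤ) * l) := by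
    obtain ⟨u, hu⟩ := N_even hk
    exact ⟨(u:ℤ) * l, by rw [hu]; push_cast; ring⟩
  rcases Nat.even_or_odd (c+1) with hpar | hpar
  · -- even syllable: everything commutes
    have hse : Even s := by
      obtain ⟨u, hu⟩ := hpar
      exact (Even.add ⟨(u:ℤ), by push_cast; omega⟩ hNeZ)
    have hcomm : Commute ((X k) ^ M) ((B k) ^ s) :=
      (moveXBz_even s hse M).symm
    have hpn : (σr k ([c+1], m, l)) ^ n = (X k) ^ (M * n) * (B k) ^ (s * n) := by
      rw [hform, hcomm.mul_pow, zpow_pow, zpow_pow]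
    rw [hpn] at h
    exact endB hk _ _ (by
      intro hz
      rcases mul_eq_zero.1 hz with h' | h'
      · exact hs0 h'
      · have : n = 0 := by exact_mod_cast h'
        omega) h
  · -- odd syllable
    have hso : Odd s := by
      obtain ⟨u, hu⟩ := hpar
      obtain ⟨v, hv⟩ := hNeZ
      refine ⟨(u:ℤ) + v, ?_⟩
      rw [hsdef, hv]
      have hc2 : (c:ℤ) = 2*(u:ℤ) := by
        have : c = 2*u := by omega
        exact_mod_cast this
      rw [hc2]
      ring
    have hsq : (σr k ([c+1], m, l)) ^ 2 = (B k) ^ (2*s) := by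
      rw [hform, pow_two]
      calc (X k)^M * (B k)^s * ((X k)^M * (B k)^s)
          = (X k)^M * ((B k)^s * (X k)^M) * (B k)^s := by group
        _ = (X k)^M * ((X k)^(-M) * (B k)^s) * (B k)^s := by rw [moveXBz_odd s hso M]
        _ = ((X k)^M * (X k)^(-M)) * ((B k)^s * (B k)^s) := by group
        _ = (B k) ^ (2*s) := by
            rw [← zpow_add, add_neg_cancel, zpow_zero, one_mul, ← zpow_add]
            congr 1; ring
    rcases Nat.even_or_odd n with ⟨q, hnq⟩ | ⟨q, hnq⟩
    · have hpn : (σr k ([c+1], m, l)) ^ n = (B k) ^ (2*s*q) := by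
        rw [show n = 2 * q by omega, pow_mul, hsq, zpow_pow]
      rw [hpn] at h
      have : (X k) ^ (0:ℤ) * (B k) ^ (2*s*q) = 1 := by rw [zpow_zero, one_mul]; exact h
      exact endB hk _ _ (by
        intro hz
        have hq0 : (q:ℤ) = 0 := by
          rcases mul_eq_zero.1 hz with h' | h'
          · rcases mul_eq_zero.1 h' with h'' | h''
            · norm_num at h''
            · exact absurd h'' hs0
          · exact h'
        have : q = 0 := by exact_mod_cast hq0
        omega) this
    · have hpn : (σr k ([c+1], m, l)) ^ n = (X k) ^ M * (B k) ^ (s * n) := by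
        have hexp : 2*s*(q:ℤ) + s = s * ((2*q+1 : ℕ) : ℤ) := by push_cast; ring
        rw [show n = 2 * q + 1 by omega, pow_succ, pow_mul, hsq, zpow_pow, hform]
        calc (B k)^(2*s*(q:ℤ)) * ((X k)^M * (B k)^s)
            = ((B k)^(2*s*(q:ℤ)) * (X k)^M) * (B k)^s := by group
          _ = ((X k)^M * (B k)^(2*s*(q:ℤ))) * (B k)^s := by
              rw [moveXBz_even _ ⟨s*q, by ring⟩]
          _ = (X k)^M * (B k)^(2*s*(q:ℤ) + s) := by rw [mul_assoc, ← zpow_add]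
          _ = (X k)^M * (B k)^(s * ((2*q+1 : ℕ) : ℤ)) := by rw [hexp]
      rw [hpn] at h
      exact endB hk _ _ (by
        intro hz
        rcases mul_eq_zero.1 hz with h' | h'
        · exact hs0 h'
        · have : n = 0 := by exact_mod_cast h'
          omega) h

end PkGroup

namespace PkGroup
open PkModel

variable {k : ℕ}

lemma gen_ne {c : ℕ} (hc : c ≠ 0) : gen k c = (B k) ^ c := by simp [gen, hc]

lemma ok_append_left {N : ℕ} {u v : List ℕ} (h : ok N (u ++ v)) : ok N u := by
  refine ⟨fun c hc => h.1 c (by simp [hc]), ?_⟩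
  have : List.IsChain Alt (u ++ v) := h.2
  rw [List.isChain_append] at this
  exact this.1

lemma ok_append_single {N : ℕ} {u : List ℕ} {e : ℕ} (hu : ok N u) (he : e ≠ 0) (heN : e < N)
    (hlast : ∀ d ∈ u.getLast?, d = 0) : ok N (u ++ [e]) := by
  constructor
  · intro c hc
    rcases List.mem_append.1 hc with h | h
    · exact hu.1 c h
    · simp at h; omega
  · refine List.isChain_append.2 ?_
    refine ⟨hu.2, List.isChain_singleton _, ?_⟩
    intro x hx y hy
    simp at hy
    subst hy
    have hx0 := hlast x hx
    subst hx0
    unfold Alt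
    simpa using he

lemma moveXYgen (hk : 0 < k) (c : ℕ) (m l : ℤ) :
    ∃ m' l' : ℤ, (X k) ^ m * (Y k) ^ l * gen k c = gen k c * ((X k) ^ m' * (Y k) ^ l') := by
  rcases c with _ | d
  · refine ⟨m, -l, ?_⟩
    rw [gen_zero]
    calc (X k)^m * (Y k)^l * A k = (X k)^m * ((Y k)^l * A k) := by group
      _ = (X k)^m * (A k * (Y k)^(-l)) := by rw [moveYA]
      _ = ((X k)^m * A k) * (Y k)^(-l) := by group
      _ = (A k * (X k)^m) * (Y k)^(-l) := by rw [moveXA]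
      _ = A k * ((X k)^m * (Y k)^(-l)) := by group
  · refine ⟨m * (-1)^(d+1), l, ?_⟩
    rw [gen_succ]
    have hyB : (Y k) ^ l * (B k) ^ (d+1) = (B k) ^ (d+1) * (Y k) ^ l :=
      (((commBY (k := k)).pow_left (d+1)).zpow_right l).symm.eq
    calc (X k)^m * (Y k)^l * (B k)^(d+1) = (X k)^m * ((Y k)^l * (B k)^(d+1)) := by group
      _ = (X k)^m * ((B k)^(d+1) * (Y k)^l) := by rw [hyB]
      _ = ((X k)^m * (B k)^(d+1)) * (Y k)^l := by group
      _ = ((B k)^(d+1) * (X k)^(m * (-1)^(d+1))) * (Y k)^l := by rw [moveXB]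
      _ = (B k)^(d+1) * ((X k)^(m * (-1)^(d+1)) * (Y k)^l) := by group

lemma conj_shorten (hk : 0 < k) (c₁ : ℕ) (w₁ : List ℕ) (hw1 : w₁ ≠ [])
    (hok : ok (2^k) (c₁ :: w₁)) (m l : ℤ)
    (hsame : (c₁ = 0 ↔ w₁.getLast hw1 = 0)) :
    ∃ v m₂ l₂, ok (2^k) v ∧ v.length < (c₁ :: w₁).length ∧
      (gen k c₁)⁻¹ * σr k (c₁ :: w₁, m, l) * gen k c₁ = σr k (v, m₂, l₂) := by
  set cr := w₁.getLast hw1 with hcr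
  set u := w₁.dropLast with hu
  have hsplit : u ++ [cr] = w₁ := List.dropLast_append_getLast hw1
  have hokw₁ : ok (2^k) w₁ := ok_tail hok
  have hoku : ok (2^k) u := by
    rw [← hsplit] at hokw₁
    exact ok_append_left hokw₁
  have hulen : u.length + 1 = w₁.length := by
    rw [← hsplit]; simp
  obtain ⟨m', l', hmove⟩ := moveXYgen hk c₁ m l
  have hq : (gen k c₁)⁻¹ * σr k (c₁ :: w₁, m, l) * gen k c₁
      = σw k u * (gen k cr * gen k c₁) * ((X k)^m' * (Y k)^l') := by
    rw [σr_cons]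
    have h1 : (gen k c₁)⁻¹ * (gen k c₁ * σr k (w₁, m, l)) * gen k c₁
        = σr k (w₁, m, l) * gen k c₁ := by group
    rw [h1, σr_def, ← hsplit, σw_append_single]
    calc σw k u * gen k cr * (X k)^m * (Y k)^l * gen k c₁
        = σw k u * gen k cr * ((X k)^m * (Y k)^l * gen k c₁) := by group
      _ = σw k u * gen k cr * (gen k c₁ * ((X k)^m' * (Y k)^l')) := by rw [hmove]
      _ = σw k u * (gen k cr * gen k c₁) * ((X k)^m' * (Y k)^l') := by group
  -- `u`'s last entry is `0` when `cr ≠ 0`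
  have hlastu : cr ≠ 0 → ∀ d ∈ u.getLast?, d = 0 := by
    intro hcr0 d hd
    have h2 : List.IsChain Alt w₁ := hokw₁.2
    rw [← hsplit, List.isChain_append] at h2
    have h3 := h2.2.2 d hd cr (by simp)
    unfold Alt at h3
    tauto
  rcases Nat.eq_zero_or_pos c₁ with hc₁ | hc₁
  · -- c₁ = 0, cr = 0 : merge `a * a = x`
    subst hc₁
    have hcr0 : cr = 0 := hsame.1 rfl
    refine ⟨u, m' + 1, l', hoku, by simp; omega, ?_⟩
    rw [hq, hcr0, gen_zero]
    have hX : A k * A k = (X k) ^ (1:ℤ) := by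
      rw [zpow_one, show X k = A k ^ 2 from rfl, pow_two]
    rw [hX, σr_def]
    calc σw k u * (X k)^(1:ℤ) * ((X k)^m' * (Y k)^l')
        = σw k u * ((X k)^(1:ℤ) * (X k)^m') * (Y k)^l' := by group
      _ = σw k u * (X k)^(m'+1) * (Y k)^l' := by rw [← zpow_add, add_comm]
  · -- c₁ ≠ 0, cr ≠ 0 : merge `b`-syllables
    have hc₁0 : c₁ ≠ 0 := by omega
    have hcr0 : cr ≠ 0 := by tauto
    have hc₁N : c₁ < 2^k := ok_head_lt hok
    have hcrN : cr < 2^k := by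
      apply hokw₁.1
      rw [← hsplit]; simp
    have hBB : gen k cr * gen k c₁ = (B k) ^ (cr + c₁) := by
      rw [gen_ne hcr0, gen_ne hc₁0, pow_add]
    rcases lt_trichotomy (cr + c₁) (2^k) with he | he | he
    · -- no wrap
      refine ⟨u ++ [cr + c₁], m', l', ok_append_single hoku (by omega) he (hlastu hcr0),
        by simp; omega, ?_⟩
      rw [hq, hBB, σr_def, σw_append_single, gen_ne (by omega : cr + c₁ ≠ 0)]
      group
    · -- exact wrap : `b^N = y`
      refine ⟨u, m', l' + 1, hoku, by simp; omega, ?_⟩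
      rw [hq, hBB, he]
      have hY : (B k) ^ (2^k) = (Y k) ^ (1:ℤ) := by rw [zpow_one]; rfl
      rw [hY, σr_def]
      calc σw k u * (Y k)^(1:ℤ) * ((X k)^m' * (Y k)^l')
          = σw k u * (((Y k)^(1:ℤ) * (X k)^m') * (Y k)^l') := by group
        _ = σw k u * (((X k)^m' * (Y k)^(1:ℤ)) * (Y k)^l') := by rw [swapYX hk]
        _ = σw k u * (X k)^m' * ((Y k)^(1:ℤ) * (Y k)^l') := by group
        _ = σw k u * (X k)^m' * (Y k)^(l'+1) := by rw [← zpow_add, add_comm]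
    · -- overflow : `b^e = b^(e-N) * y`
      have he2 : cr + c₁ - 2^k ≠ 0 := by omega
      have he3 : cr + c₁ - 2^k < 2^k := by omega
      refine ⟨u ++ [cr + c₁ - 2^k], m', l' + 1,
        ok_append_single hoku he2 he3 (hlastu hcr0), by simp; omega, ?_⟩
      have hBsplit : (B k) ^ (cr + c₁) = (B k) ^ (cr + c₁ - 2^k) * (Y k) ^ (1:ℤ) := by
        rw [zpow_one]
        show _ = _ * (B k) ^ (2^k)
        rw [← pow_add]
        congr 1
        omega
      rw [hq, hBB, hBsplit, σr_def, σw_append_single, gen_ne he2]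
      calc σw k u * ((B k)^(cr + c₁ - 2^k) * (Y k)^(1:ℤ)) * ((X k)^m' * (Y k)^l')
          = σw k u * (B k)^(cr + c₁ - 2^k) * (((Y k)^(1:ℤ) * (X k)^m') * (Y k)^l') := by group
        _ = σw k u * (B k)^(cr + c₁ - 2^k) * (((X k)^m' * (Y k)^(1:ℤ)) * (Y k)^l') := by
            rw [swapYX hk]
        _ = σw k u * (B k)^(cr + c₁ - 2^k) * (X k)^m' * ((Y k)^(1:ℤ) * (Y k)^l') := by group
        _ = σw k u * (B k)^(cr + c₁ - 2^k) * (X k)^m' * (Y k)^(l'+1) := by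
            rw [← zpow_add, add_comm (1:ℤ) l']

/-- powers of a cyclically reduced element keep growing -/
lemma cyc_pow (hk : 0 < k) (w : List ℕ) (hok : ok (2^k) w) (hw : w ≠ []) (m l : ℤ)
    (halt : ∀ cl ∈ w.getLast?, ∀ ch ∈ w.head?, Alt cl ch) :
    ∀ j : ℕ, ∃ (u' : List ℕ) (m₂ l₂ : ℤ),
      ((φ hk ((σr k (w, m, l)) ^ (j+1))) ε).val = (w ++ u', m₂, l₂) := by
  intro j
  induction j with
  | zero =>
    refine ⟨[], m, l, ?_⟩
    rw [pow_one, nf_σr hk w hok, List.append_nil]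
  | succ j ih =>
    obtain ⟨u', m₂, l₂, hval⟩ := ih
    rw [pow_succ', map_mul, Equiv.Perm.mul_apply]
    set s' := (φ hk ((σr k (w, m, l)) ^ (j+1))) ε with hs'
    have hcomp : ∀ cl ∈ w.getLast?, ∀ ch ∈ s'.val.1.head?, Alt cl ch := by
      intro cl hcl ch hch
      refine halt cl hcl ch ?_
      rw [hval] at hch
      simp only at hch
      rwa [List.head?_append_of_ne_nil _ hw] at hch
    obtain ⟨m₃, l₃, h3⟩ := concat hk w hok m l s' hcomp
    rw [h3, hval]
    exact ⟨w ++ u', m₃, l₃, by simp⟩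

end PkGroup

namespace PkGroup
open PkModel

variable {k : ℕ}

lemma key (hk : 0 < k) (n : ℕ) (hn : 0 < n) : ∀ p : Pk k, p ^ n = 1 → p = 1 := by
  suffices H : ∀ (L : ℕ), ∀ p : Pk k, ((φ hk p) ε).val.1.length ≤ L → p ^ n = 1 → p = 1 by
    intro p
    exact H _ p le_rfl
  intro L
  induction L using Nat.strong_induction_on with
  | _ L IH =>
  intro p hlen hpn
  have hok2 := ((φ hk p) ε).2
  rcases hW : ((φ hk p) ε).val with ⟨w, m, l⟩
  rw [hW] at hok2 hlen
  simp only at hok2 hlen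
  have hp : p = σr k (w, m, l) := by rw [recon_eps hk p, hW]
  rcases w with _ | ⟨c₁, w₁⟩
  · -- empty word
    have h1 : p = (X k) ^ m * (Y k) ^ l := by rw [hp, σr_nil_eq]
    have hcomm : Commute ((X k) ^ m) ((Y k) ^ l) := (swapYX hk l m).symm
    have hpn2 : p ^ n = (X k) ^ (m * n) * (Y k) ^ (l * n) := by
      rw [h1, hcomm.mul_pow, zpow_pow, zpow_pow]
    have hσ : σr k ([], m * n, l * n) = 1 := by rw [σr_nil_eq, ← hpn2, hpn]
    obtain ⟨h4, h5⟩ := σr_nil_eq_one hk _ _ hσ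
    have hnZ : (n : ℤ) ≠ 0 := by exact_mod_cast (by omega : n ≠ 0)
    have hm : m = 0 := by rcases mul_eq_zero.1 h4 with h' | h' <;> [exact h'; exact absurd h' hnZ]
    have hl : l = 0 := by rcases mul_eq_zero.1 h5 with h' | h' <;> [exact h'; exact absurd h' hnZ]
    rw [h1, hm, hl, zpow_zero, zpow_zero, one_mul]
  · rcases w₁ with _ | ⟨c₂, w₂⟩
    · -- length one : no torsion, contradiction
      exfalso
      rcases c₁ with _ | c
      · exact len1_zero hk m l n hn (by rw [← hp]; exact hpn)
      · exact len1_succ hk c (ok_head_lt hok2) m l n hn (by rw [← hp]; exact hpn)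
    · -- length at least two
      have hw1 : (c₂ :: w₂) ≠ [] := List.cons_ne_nil _ _
      set cr := (c₂ :: w₂).getLast hw1 with hcr
      by_cases hsame : (c₁ = 0 ↔ cr = 0)
      · -- conjugate to something shorter
        obtain ⟨v, m₂, l₂, hokv, hlt, hconj⟩ :=
          conj_shorten hk c₁ (c₂ :: w₂) hw1 hok2 m l hsame
        set g := gen k c₁ with hg
        set q := g⁻¹ * p * g with hqdef
        have hqn : q ^ n = 1 := by
          rw [hqdef, show g⁻¹ * p * g = g⁻¹ * p * (g⁻¹)⁻¹ by rw [inv_inv], conj_pow, hpn]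
          group
        have hqnf : q = σr k (v, m₂, l₂) := by rw [hqdef, hp, ← hconj]
        have hlenv : ((φ hk q) ε).val.1.length ≤ v.length := by
          rw [hqnf, nf_σr hk v hokv]
        have hvL : v.length < L := by
          have := hlt
          simp only [List.length_cons] at this hlen
          omega
        have hq1 : q = 1 := IH v.length hvL q hlenv hqn
        have hpg : p = g * q * g⁻¹ := by rw [hqdef]; group
        rw [hpg, hq1]
        group
      · -- cyclically reduced : contradiction
        exfalso
        have halt : ∀ cl ∈ (c₁ :: c₂ :: w₂).getLast?, ∀ ch ∈ (c₁ :: c₂ :: w₂).head?, Alt cl ch := by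
          intro cl hcl ch hch
          have h1 : cl = cr := by
            rw [List.getLast?_cons_cons, List.getLast?_eq_getLast_of_ne_nil hw1] at hcl
            simp at hcl
            rw [hcr, ← hcl]
          have h2 : ch = c₁ := by simp at hch; omega
          subst h1; subst h2
          unfold Alt
          tauto
        obtain ⟨u', m₂, l₂, hval⟩ := cyc_pow hk (c₁ :: c₂ :: w₂) hok2 (List.cons_ne_nil _ _)
          m l halt (n - 1)
        rw [show n - 1 + 1 = n by omega, ← hp, hpn, map_one, Equiv.Perm.one_apply] at hval
        have h6 := congrArg Prod.fst hval
        simp only at h6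
        exact (List.cons_ne_nil c₁ (c₂ :: (w₂ ++ u')))
          (show c₁ :: c₂ :: (w₂ ++ u') = [] from h6.symm)

end PkGroup

/-- For every positive integer `k`, the group
`P_k = ⟨a, b ∣ a b^(2^k) a⁻¹ b^(2^k), b a² b⁻¹ a²⟩` is torsion-free. -/
theorem Pk_isTorsionFree (k : ℕ) (hk : 0 < k) : ∀ g : Pk k, g ≠ 1 → ¬IsOfFinOrder g := by
  intro g hg hfin
  obtain ⟨n, hn, hgn⟩ := isOfFinOrder_iff_pow_eq_one.1 hfin
  exact hg (PkGroup.key hk n hn g hgn)
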